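/- Assume that for every d ≥ 2, every n ≥ 1, every α ∈ [0, π/2], and all unit vectors u₁,…,u_n ∈ S^{d−1}, the normalized surface measure of ⋃_j Z(u_j, α) is at most that of ⋃_j Z(v_j, α), where v_j = (cos((j−1)π/n), sin((j−1)π/n), 0, …, 0). Then for every n×n correlation matrix Σ, every t ≥ 0, and h ∼ N(0, Σ), z ∼ N(0, Σ^cos): ℙ[min_i |z_i| ≥ t] ≤ ℙ[min_i |h_i| ≥ t]. -/

import Mathlib

open Real MeasureTheory ProbabilityTheory

/-- The standard Gaussian measure on `ℝⁿ`. -/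
noncomputable def stdGaussianPi (n : ℕ) : Measure (Fin n → ℝ) :=
  Measure.pi fun _ => gaussianReal 0 1

/- The centered Gaussian measure `N(0, S)` with covariance `S` (junk `0` if `S` is not
positive semidefinite). -/
open Classical in
noncomputable def gaussianOfCov {n : ℕ} (S : Matrix (Fin n) (Fin n) ℝ) :
    Measure (Fin n → ℝ) :=
  if hS : S.PosSemidef then (stdGaussianPi n).map
      ((hS.1.eigenvectorUnitary : Matrix (Fin n) (Fin n) ℝ) *
        Matrix.diagonal (Real.sqrt ∘ hS.1.eigenvalues) *
        (star hS.1.eigenvectorUnitary : Matrix (Fin n) (Fin n) ℝ)).mulVec else 0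

/-- The spherical zone `Z(u, α) = {w ∈ S^{d-1} : |⟨w, u⟩| ≤ sin α}`. -/
def sphericalZone {d : ℕ} (u : EuclideanSpace ℝ (Fin d)) (α : ℝ) :
    Set (EuclideanSpace ℝ (Fin d)) :=
  {w | w ∈ Metric.sphere (0 : EuclideanSpace ℝ (Fin d)) 1 ∧ |(inner ℝ w u : ℝ)| ≤ Real.sin α}

/-- The uniform (normalized surface) probability measure on the unit sphere of `ℝ^d`,
viewed as a measure on the ambient space. -/
noncomputable def uniformSphere (d : ℕ) : Measure (EuclideanSpace ℝ (Fin d)) :=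
  ((volume : Measure (EuclideanSpace ℝ (Fin d))).toSphere Set.univ)⁻¹ •
    ((volume : Measure (EuclideanSpace ℝ (Fin d))).toSphere.map Subtype.val)

/-- The evenly spaced great-subsphere normals `v j = (cos((j-1)π/n), sin((j-1)π/n), 0, …, 0)`
in `ℝ^d` (0-indexed `j`). -/
noncomputable def evenZoneNormal (d n : ℕ) (j : Fin n) : EuclideanSpace ℝ (Fin d) :=
  WithLp.toLp 2 fun k : Fin d => if (k : ℕ) = 0 then Real.cos ((j : ℝ) * π / n)
    else if (k : ℕ) = 1 then Real.sin ((j : ℝ) * π / n) else 0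

noncomputable def Matrix.PosSemidef.sqrt {n : ℕ} {S : Matrix (Fin n) (Fin n) ℝ}
    (hS : S.PosSemidef) : Matrix (Fin n) (Fin n) ℝ :=
  (hS.1.eigenvectorUnitary : Matrix (Fin n) (Fin n) ℝ) *
    Matrix.diagonal (Real.sqrt ∘ hS.1.eigenvalues) *
    (star hS.1.eigenvectorUnitary : Matrix (Fin n) (Fin n) ℝ)

lemma Matrix.PosSemidef.isHermitian_sqrt {n : ℕ} {S : Matrix (Fin n) (Fin n) ℝ}
    (hS : S.PosSemidef) : hS.sqrt.IsHermitian := by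
  simp [Matrix.IsHermitian, Matrix.PosSemidef.sqrt, Matrix.star_eq_conjTranspose, Matrix.mul_assoc]

lemma Matrix.PosSemidef.sqrt_mul_self {n : ℕ} {S : Matrix (Fin n) (Fin n) ℝ}
    (hS : S.PosSemidef) : hS.sqrt * hS.sqrt = S := by
  have hU : (star hS.1.eigenvectorUnitary : Matrix (Fin n) (Fin n) ℝ) *
      (hS.1.eigenvectorUnitary : Matrix (Fin n) (Fin n) ℝ) = 1 :=
    Matrix.mem_unitaryGroup_iff'.mp hS.1.eigenvectorUnitary.2
  have hD : Matrix.diagonal (Real.sqrt ∘ hS.1.eigenvalues) *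
      Matrix.diagonal (Real.sqrt ∘ hS.1.eigenvalues) = Matrix.diagonal hS.1.eigenvalues := by
    rw [Matrix.diagonal_mul_diagonal]
    congr 1
    ext i
    simp [Real.mul_self_sqrt (hS.eigenvalues_nonneg i)]
  have hs := hS.1.spectral_theorem
  rw [Unitary.conjStarAlgAut_apply] at hs
  calc hS.sqrt * hS.sqrt
      = (hS.1.eigenvectorUnitary : Matrix (Fin n) (Fin n) ℝ) *
        (Matrix.diagonal (Real.sqrt ∘ hS.1.eigenvalues) *
        ((star hS.1.eigenvectorUnitary : Matrix (Fin n) (Fin n) ℝ) *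
        (hS.1.eigenvectorUnitary : Matrix (Fin n) (Fin n) ℝ)) *
        Matrix.diagonal (Real.sqrt ∘ hS.1.eigenvalues)) *
        (star hS.1.eigenvectorUnitary : Matrix (Fin n) (Fin n) ℝ) := by
        simp only [Matrix.PosSemidef.sqrt, Matrix.mul_assoc]
    _ = S := by
        rw [hU, Matrix.mul_one, hD]
        conv_rhs => rw [hs]
        simp

namespace VZaux

open Set Metric ENNReal

variable {n : ℕ}

lemma lintegral_pi_prod : ∀ (m : ℕ) (f : Fin m → ℝ → ℝ≥0∞), (∀ i, Measurable (f i)) →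
    ∫⁻ x : Fin m → ℝ, ∏ i, f i (x i) ∂(Measure.pi fun _ => (volume : Measure ℝ))
      = ∏ i, ∫⁻ y, f i y := by
  intro m
  induction m with
  | zero =>
    intro f hf
    simp [Measure.pi_univ]
  | succ m ih =>
    intro f hf
    have mp := measurePreserving_piFinSuccAbove (fun _ : Fin (m + 1) => (volume : Measure ℝ)) 0
    have hG : Measurable fun p : ℝ × (Fin m → ℝ) => f 0 p.1 * ∏ j, f (Fin.succ j) (p.2 j) :=
      ((hf 0).comp measurable_fst).mul
        ((Finset.measurable_prod _ fun j _ =>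
          (hf (Fin.succ j)).comp (measurable_pi_apply j)).comp measurable_snd)
    have key : ∀ x : Fin (m + 1) → ℝ, ∏ i, f i (x i)
        = (fun p : ℝ × (Fin m → ℝ) => f 0 p.1 * ∏ j, f (Fin.succ j) (p.2 j))
            ((MeasurableEquiv.piFinSuccAbove (fun _ => ℝ) 0) x) := by
      intro x
      simp [MeasurableEquiv.piFinSuccAbove_apply, Fin.prod_univ_succ, Fin.succAbove_zero,
        Fin.tail]
    calc ∫⁻ x : Fin (m + 1) → ℝ, ∏ i, f i (x i) ∂(Measure.pi fun _ => (volume : Measure ℝ))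
        = ∫⁻ p : ℝ × (Fin m → ℝ), f 0 p.1 * ∏ j, f (Fin.succ j) (p.2 j)
            ∂((volume : Measure ℝ).prod (Measure.pi fun _ => (volume : Measure ℝ))) := by
          rw [← mp.lintegral_comp hG]
          exact lintegral_congr key
      _ = (∫⁻ y, f 0 y) * ∏ j, ∫⁻ y, f (Fin.succ j) y := by
          have h2 := lintegral_prod_mul (μ := (volume : Measure ℝ))
            (ν := Measure.pi fun _ : Fin m => (volume : Measure ℝ))
            (hf 0).aemeasurable
            ((Finset.measurable_prod Finset.univ fun j _ =>
              (hf (Fin.succ j)).comp (measurable_pi_apply j)).aemeasurable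
              (μ := Measure.pi fun _ : Fin m => (volume : Measure ℝ)))
          simp only [Function.comp] at h2
          rw [h2, ih _ (fun j => hf (Fin.succ j))]
      _ = ∏ i, ∫⁻ y, f i y := (Fin.prod_univ_succ fun i => ∫⁻ y, f i y).symm

lemma pi_withDensity (m : ℕ) (μ : Fin m → Measure ℝ) [∀ i, SigmaFinite (μ i)]
    (f : Fin m → ℝ → ℝ≥0∞) (hf : ∀ i, Measurable (f i))
    (hμ : ∀ i, μ i = (volume : Measure ℝ).withDensity (f i)) :
    (Measure.pi μ)
      = (Measure.pi fun _ : Fin m => (volume : Measure ℝ)).withDensity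
          (fun x => ∏ i, f i (x i)) := by
  refine Measure.pi_eq fun s hs => ?_
  simp_rw [hμ]
  rw [withDensity_apply _ (MeasurableSet.univ_pi hs)]
  have hind : ∀ x : Fin m → ℝ, (Set.univ.pi s).indicator (fun x => ∏ i, f i (x i)) x
      = ∏ i, (s i).indicator (f i) (x i) := by
    intro x
    by_cases hx : x ∈ Set.univ.pi s
    · rw [Set.indicator_of_mem hx]
      exact Finset.prod_congr rfl fun i _ =>
        (Set.indicator_of_mem (hx i (Set.mem_univ i)) _).symm
    · rw [Set.indicator_of_notMem hx]
      rw [Set.mem_pi] at hx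
      push_neg at hx
      obtain ⟨i, _, hi⟩ := hx
      exact (Finset.prod_eq_zero (Finset.mem_univ i) (Set.indicator_of_notMem hi _)).symm
  calc ∫⁻ x in Set.univ.pi s, ∏ i, f i (x i) ∂(Measure.pi fun _ => (volume : Measure ℝ))
      = ∫⁻ x, ∏ i, (s i).indicator (f i) (x i) ∂(Measure.pi fun _ => (volume : Measure ℝ)) := by
        rw [← lintegral_indicator (MeasurableSet.univ_pi hs)]
        exact lintegral_congr hind
    _ = ∏ i, ∫⁻ y, (s i).indicator (f i) y := lintegral_pi_prod m _
        (fun i => (hf i).indicator (hs i))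
    _ = ∏ i, (volume : Measure ℝ).withDensity (f i) (s i) := by
        refine Finset.prod_congr rfl fun i _ => ?_
        rw [withDensity_apply _ (hs i), lintegral_indicator (hs i)]


noncomputable def gden (n : ℕ) (r : ℝ) : ℝ≥0∞ :=
  ENNReal.ofReal ((Real.sqrt (2 * π))⁻¹ ^ n * Real.exp (-r ^ 2 / 2))

lemma measurable_gden (n : ℕ) : Measurable (gden n) := by
  apply Measurable.ennreal_ofReal
  fun_prop

/-- the standard Gaussian measure on Euclidean space, as a density against Lebesgue -/
noncomputable def gmeas (n : ℕ) : Measure (EuclideanSpace ℝ (Fin n)) :=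
  (volume : Measure (EuclideanSpace ℝ (Fin n))).withDensity fun x => gden n ‖x‖

lemma prod_gaussianPDF_eq {n : ℕ} (x : EuclideanSpace ℝ (Fin n)) :
    (∏ i, gaussianPDF 0 1 (x i)) = gden n ‖x‖ := by
  have hnn : ∀ i : Fin n, i ∈ Finset.univ → 0 ≤ gaussianPDFReal 0 1 (x i) := fun i _ =>
    gaussianPDFReal_nonneg 0 1 (x i)
  rw [gaussianPDF_def]
  rw [← ENNReal.ofReal_prod_of_nonneg hnn, gden]
  congr 1
  have hx : ‖x‖ ^ 2 = ∑ i, (x i) ^ 2 := by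
    rw [EuclideanSpace.norm_eq]
    rw [Real.sq_sqrt (by positivity)]
    refine Finset.sum_congr rfl fun i _ => by rw [Real.norm_eq_abs, sq_abs]
  simp only [gaussianPDFReal, NNReal.coe_one, mul_one, sub_zero]
  rw [Finset.prod_mul_distrib, Finset.prod_const, Finset.card_univ, Fintype.card_fin,
    ← Real.exp_sum]
  congr 1
  rw [hx]
  rw [← Finset.sum_div, ← Finset.sum_neg_distrib]

lemma measurable_prodPDF (n : ℕ) :
    Measurable fun y : Fin n → ℝ => ∏ i, gaussianPDF 0 1 (y i) :=
  Finset.measurable_prod _ fun i _ => (measurable_gaussianPDF 0 1).comp (measurable_pi_apply i)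

lemma stdGaussianPi_eq (n : ℕ) :
    stdGaussianPi n = (volume : Measure (Fin n → ℝ)).withDensity
      (fun x => ∏ i, gaussianPDF 0 1 (x i)) := by
  rw [stdGaussianPi, volume_pi]
  exact pi_withDensity n (fun _ => gaussianReal 0 1) (fun _ => gaussianPDF 0 1)
    (fun _ => measurable_gaussianPDF 0 1)
    (fun _ => gaussianReal_of_var_ne_zero 0 one_ne_zero)

/-- bridge: `stdGaussianPi` and `gmeas` -/
lemma stdGaussianPi_apply (n : ℕ) {P : Set (Fin n → ℝ)} (hP : MeasurableSet P) :
    stdGaussianPi n P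
      = gmeas n (((MeasurableEquiv.toLp 2 (Fin n → ℝ)).symm) ⁻¹' P) := by
  have hφ := EuclideanSpace.volume_preserving_symm_measurableEquiv_toLp (Fin n)
  have hP' : MeasurableSet (((MeasurableEquiv.toLp 2 (Fin n → ℝ)).symm) ⁻¹' P) :=
    ((MeasurableEquiv.toLp 2 (Fin n → ℝ)).symm).measurable hP
  rw [stdGaussianPi_eq, withDensity_apply _ hP, gmeas, withDensity_apply _ hP',
    ← lintegral_indicator hP, ← lintegral_indicator hP']
  rw [← hφ.lintegral_comp ((measurable_prodPDF n).indicator hP)]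
  refine lintegral_congr fun x => ?_
  have hco : ∀ y : EuclideanSpace ℝ (Fin n), ∀ i,
      ((MeasurableEquiv.toLp 2 (Fin n → ℝ)).symm) y i = y i := fun y i => rfl
  by_cases hx : ((MeasurableEquiv.toLp 2 (Fin n → ℝ)).symm) x ∈ P
  · rw [Set.indicator_of_mem hx, Set.indicator_of_mem (by exact hx)]
    rw [← prod_gaussianPDF_eq x]
    rfl
  · rw [Set.indicator_of_notMem hx, Set.indicator_of_notMem (by exact hx)]

/-- invariance of the Gaussian under linear isometries -/
lemma gmeas_preimage {n : ℕ} (e : EuclideanSpace ℝ (Fin n) ≃ₗᵢ[ℝ] EuclideanSpace ℝ (Fin n))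
    {A : Set (EuclideanSpace ℝ (Fin n))} (hA : MeasurableSet A) :
    gmeas n (e ⁻¹' A) = gmeas n A := by
  have he := e.measurePreserving
  have hA' : MeasurableSet (e ⁻¹' A) := hA.preimage e.toHomeomorph.continuous.measurable
  rw [gmeas, withDensity_apply _ hA', withDensity_apply _ hA,
    ← lintegral_indicator hA', ← lintegral_indicator hA]
  have hFm : Measurable fun a : EuclideanSpace ℝ (Fin n) => A.indicator (fun a => gden n ‖a‖) a :=
    Measurable.indicator ((measurable_gden n).comp continuous_norm.measurable) hA
  rw [← he.lintegral_comp hFm]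
  refine lintegral_congr fun x => ?_
  by_cases hx : e x ∈ A
  · rw [Set.indicator_of_mem hx, Set.indicator_of_mem (by exact hx), e.norm_map]
  · rw [Set.indicator_of_notMem hx, Set.indicator_of_notMem (by exact hx)]


lemma inner_euclidean (x y : EuclideanSpace ℝ (Fin n)) :
    (inner ℝ x y : ℝ) = ∑ i, x i * y i := by
  simp [PiLp.inner_apply, RCLike.inner_apply, starRingEnd_apply]
  exact Finset.sum_congr rfl fun _ _ => mul_comm _ _

/-- rows of the psd square root, as Euclidean vectors -/
noncomputable def rowVec {S : Matrix (Fin n) (Fin n) ℝ} (hS : S.PosSemidef) (i : Fin n) :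
    EuclideanSpace ℝ (Fin n) := WithLp.toLp 2 fun k => hS.sqrt i k

lemma inner_rowVec {S : Matrix (Fin n) (Fin n) ℝ} (hS : S.PosSemidef) (i j : Fin n) :
    (inner ℝ (rowVec hS i) (rowVec hS j) : ℝ) = S i j := by
  have hsym : ∀ a b : Fin n, hS.sqrt a b = hS.sqrt b a := by
    intro a b
    have h := hS.isHermitian_sqrt
    have := congr_fun (congr_fun h a) b
    rw [Matrix.conjTranspose_apply, star_trivial] at this
    exact this.symm
  rw [inner_euclidean]
  have : ∑ k, rowVec hS i k * rowVec hS j k = ∑ k, hS.sqrt i k * hS.sqrt k j :=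
    Finset.sum_congr rfl fun k _ => by rw [rowVec, rowVec, PiLp.toLp_apply, PiLp.toLp_apply, hsym j k]
  rw [this, ← Matrix.mul_apply, hS.sqrt_mul_self]

lemma norm_rowVec {S : Matrix (Fin n) (Fin n) ℝ} (hS : S.PosSemidef) (h1 : ∀ i, S i i = 1)
    (i : Fin n) : ‖rowVec hS i‖ = 1 := by
  have := inner_rowVec hS i i
  rw [h1 i] at this
  rw [norm_eq_sqrt_real_inner, this, Real.sqrt_one]

lemma inner_evenZoneNormal {m : ℕ} (i j : Fin (m + 2)) :
    (inner ℝ (evenZoneNormal (m + 2) (m + 2) i) (evenZoneNormal (m + 2) (m + 2) j) : ℝ)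
      = Real.cos (π * ((i : ℝ) - (j : ℝ)) / ((m + 2 : ℕ) : ℝ)) := by
  rw [inner_euclidean]
  rw [Fin.sum_univ_succ, Fin.sum_univ_succ]
  have h2 : ∀ k : Fin m, ∀ a : Fin (m + 2),
      evenZoneNormal (m + 2) (m + 2) a (k.succ.succ) = 0 := by
    intro k a
    simp [evenZoneNormal, Fin.val_succ]
  have hzero : ∑ k : Fin m, evenZoneNormal (m + 2) (m + 2) i (k.succ.succ)
      * evenZoneNormal (m + 2) (m + 2) j (k.succ.succ) = 0 := by
    refine Finset.sum_eq_zero fun k _ => by rw [h2, zero_mul]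
  rw [hzero]
  have e0 : ∀ a : Fin (m + 2), evenZoneNormal (m + 2) (m + 2) a 0
      = Real.cos ((a : ℝ) * π / ((m + 2 : ℕ) : ℝ)) := fun a => by simp [evenZoneNormal]
  have e1 : ∀ a : Fin (m + 2), evenZoneNormal (m + 2) (m + 2) a ((0 : Fin (m+1)).succ)
      = Real.sin ((a : ℝ) * π / ((m + 2 : ℕ) : ℝ)) := fun a => by simp [evenZoneNormal, Fin.val_succ]
  rw [e0, e0, e1, e1, add_zero]
  rw [← Real.cos_sub]
  congr 1
  ring

lemma norm_evenZoneNormal {m : ℕ} (i : Fin (m + 2)) :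
    ‖evenZoneNormal (m + 2) (m + 2) i‖ = 1 := by
  have := inner_evenZoneNormal i i
  rw [sub_self, mul_zero, zero_div, Real.cos_zero] at this
  rw [norm_eq_sqrt_real_inner, this, Real.sqrt_one]

lemma cosMatrix_posSemidef {m : ℕ} :
    (Matrix.of fun i j : Fin (m + 2) =>
      Real.cos (π * ((i : ℝ) - (j : ℝ)) / ((m + 2 : ℕ) : ℝ))).PosSemidef := by
  set n := m + 2
  let B : Matrix (Fin 2) (Fin n) ℝ := Matrix.of fun k i =>
    if k = 0 then Real.cos ((i : ℝ) * π / n) else Real.sin ((i : ℝ) * π / n)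
  have h := Matrix.posSemidef_conjTranspose_mul_self B
  have hBB : B.conjTranspose * B = Matrix.of fun i j : Fin n =>
      Real.cos (π * ((i : ℝ) - (j : ℝ)) / n) := by
    ext i j
    rw [Matrix.mul_apply]
    rw [Fin.sum_univ_two]
    simp only [Matrix.conjTranspose_apply, star_trivial, Matrix.of_apply, B]
    norm_num
    rw [← Real.cos_sub]
    congr 1
    ring
  rwa [hBB] at h

/-- two families with the same Gram matrix are related by a linear isometry -/
lemma exists_isometry (v c : Fin n → EuclideanSpace ℝ (Fin n))
    (h : ∀ i j, (inner ℝ (v i) (v j) : ℝ) = inner ℝ (c i) (c j)) :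
    ∃ e : EuclideanSpace ℝ (Fin n) ≃ₗᵢ[ℝ] EuclideanSpace ℝ (Fin n), ∀ i, e (v i) = c i := by
  classical
  let T : (Fin n → EuclideanSpace ℝ (Fin n)) → (Fin n → ℝ) →ₗ[ℝ] EuclideanSpace ℝ (Fin n) :=
    fun w =>
      { toFun := fun a => ∑ i, a i • w i
        map_add' := by
          intro a b
          simp [add_smul, Finset.sum_add_distrib]
        map_smul' := by
          intro r a
          simp [smul_smul, Finset.smul_sum] }
  have hT_apply : ∀ w a, T w a = ∑ i, a i • w i := fun w a => rfl
  have hinner : ∀ (w : Fin n → EuclideanSpace ℝ (Fin n)) (a b : Fin n → ℝ),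
      (inner ℝ (T w a) (T w b) : ℝ) = ∑ i, ∑ j, a i * b j * (inner ℝ (w i) (w j) : ℝ) := by
    intro w a b
    rw [hT_apply, hT_apply, sum_inner]
    refine Finset.sum_congr rfl fun i _ => ?_
    rw [inner_sum]
    refine Finset.sum_congr rfl fun j _ => ?_
    rw [real_inner_smul_left, real_inner_smul_right]
    ring
  have hIeq : ∀ a b, (inner ℝ (T v a) (T v b) : ℝ) = inner ℝ (T c a) (T c b) := by
    intro a b
    rw [hinner, hinner]
    exact Finset.sum_congr rfl fun i _ => Finset.sum_congr rfl fun j _ => by rw [h i j]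
  have hnorm : ∀ a, ‖T c a‖ = ‖T v a‖ := by
    intro a
    rw [norm_eq_sqrt_real_inner, norm_eq_sqrt_real_inner, hIeq a a]
  have hker : LinearMap.ker (T v) = LinearMap.ker (T c) := by
    ext a
    simp only [LinearMap.mem_ker]
    constructor <;> intro ha
    · rw [← norm_eq_zero, hnorm, norm_eq_zero, ha]
    · rw [← norm_eq_zero, ← hnorm, norm_eq_zero, ha]
  let e₀ : LinearMap.range (T v) ≃ₗ[ℝ] LinearMap.range (T c) :=
    (LinearMap.quotKerEquivRange (T v)).symm.trans
      ((Submodule.quotEquivOfEq _ _ hker).trans (LinearMap.quotKerEquivRange (T c)))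
  have he₀ : ∀ a : Fin n → ℝ,
      (e₀ ⟨T v a, LinearMap.mem_range_self _ a⟩ : EuclideanSpace ℝ (Fin n)) = T c a := by
    intro a
    have h1 : (LinearMap.quotKerEquivRange (T v)).symm ⟨T v a, LinearMap.mem_range_self _ a⟩
        = Submodule.Quotient.mk a := by
      rw [LinearEquiv.symm_apply_eq]
      exact Subtype.ext ((T v).quotKerEquivRange_apply_mk a).symm
    simp only [e₀, LinearEquiv.trans_apply, h1, Submodule.quotEquivOfEq_mk]
    exact (T c).quotKerEquivRange_apply_mk a
  let L : LinearMap.range (T v) →ₗᵢ[ℝ] EuclideanSpace ℝ (Fin n) :=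
    { toLinearMap := (LinearMap.range (T c)).subtype.comp e₀.toLinearMap
      norm_map' := by
        rintro ⟨y, a, rfl⟩
        simp only [LinearMap.coe_comp, Function.comp_apply, Submodule.coe_subtype,
          LinearEquiv.coe_coe]
        rw [show ((e₀ ⟨T v a, LinearMap.mem_range_self _ a⟩ : LinearMap.range (T c)) :
          EuclideanSpace ℝ (Fin n)) = T c a from he₀ a]
        rw [hnorm a]
        rfl }
  let ext := L.extend
  refine ⟨ext.toLinearIsometryEquiv rfl, fun i => ?_⟩
  have hvi : T v (Pi.single i 1) = v i := by
    rw [hT_apply]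
    rw [Finset.sum_eq_single i]
    · simp
    · intro b _ hb
      rw [Pi.single_eq_of_ne hb, zero_smul]
    · intro hi
      exact absurd (Finset.mem_univ i) hi
  have hci : T c (Pi.single i 1) = c i := by
    rw [hT_apply]
    rw [Finset.sum_eq_single i]
    · simp
    · intro b _ hb
      rw [Pi.single_eq_of_ne hb, zero_smul]
    · intro hi
      exact absurd (Finset.mem_univ i) hi
  have hmem : v i ∈ LinearMap.range (T v) := hvi ▸ LinearMap.mem_range_self _ _
  have happ : ext (v i) = c i := by
    have h2 : ext ((⟨v i, hmem⟩ : LinearMap.range (T v)) : EuclideanSpace ℝ (Fin n))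
        = L ⟨v i, hmem⟩ := L.extend_apply ⟨v i, hmem⟩
    rw [h2]
    have h3 : (⟨v i, hmem⟩ : LinearMap.range (T v)) = ⟨T v (Pi.single i 1),
        LinearMap.mem_range_self _ _⟩ := Subtype.ext hvi.symm
    rw [h3]
    show ((e₀ ⟨T v (Pi.single i 1), _⟩ : LinearMap.range (T c)) : EuclideanSpace ℝ (Fin n)) = c i
    rw [he₀, hci]
  rw [LinearIsometry.toLinearIsometryEquiv_apply]
  exact happ


/-- the event set -/
def Aset (w : Fin n → EuclideanSpace ℝ (Fin n)) (t : ℝ) : Set (EuclideanSpace ℝ (Fin n)) :=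
  {x | ∀ i, t ≤ |(inner ℝ x (w i) : ℝ)|}

lemma measurable_Aset (w : Fin n → EuclideanSpace ℝ (Fin n)) (t : ℝ) :
    MeasurableSet (Aset w t) := by
  have : Aset w t = ⋂ i, (fun x : EuclideanSpace ℝ (Fin n) => |(inner ℝ x (w i) : ℝ)|) ⁻¹' Ici t := by
    ext x; simp [Aset, Set.mem_iInter]
  rw [this]
  exact MeasurableSet.iInter fun i =>
    ((continuous_id.inner continuous_const).abs.measurable measurableSet_Ici)

/-- open zone union in the sphere -/
def Zop (w : Fin n → EuclideanSpace ℝ (Fin n)) (s : ℝ) :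
    Set (Metric.sphere (0 : EuclideanSpace ℝ (Fin n)) 1) :=
  {θ | ∃ i, |(inner ℝ (θ : EuclideanSpace ℝ (Fin n)) (w i) : ℝ)| < s}

/-- closed zone union in the sphere -/
def Zcl (w : Fin n → EuclideanSpace ℝ (Fin n)) (a : ℝ) :
    Set (Metric.sphere (0 : EuclideanSpace ℝ (Fin n)) 1) :=
  {θ | ∃ i, |(inner ℝ (θ : EuclideanSpace ℝ (Fin n)) (w i) : ℝ)| ≤ a}

lemma measurable_Zop (w : Fin n → EuclideanSpace ℝ (Fin n)) (s : ℝ) : MeasurableSet (Zop w s) := by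
  have : Zop w s = ⋃ i, (fun θ : Metric.sphere (0 : EuclideanSpace ℝ (Fin n)) 1 =>
      |(inner ℝ (θ : EuclideanSpace ℝ (Fin n)) (w i) : ℝ)|) ⁻¹' Iio s := by
    ext θ; simp [Zop]
  rw [this]
  exact MeasurableSet.iUnion fun i =>
    (((continuous_subtype_val.inner continuous_const).abs).measurable measurableSet_Iio)

lemma measurable_Zcl (w : Fin n → EuclideanSpace ℝ (Fin n)) (a : ℝ) : MeasurableSet (Zcl w a) := by
  have : Zcl w a = ⋃ i, (fun θ : Metric.sphere (0 : EuclideanSpace ℝ (Fin n)) 1 =>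
      |(inner ℝ (θ : EuclideanSpace ℝ (Fin n)) (w i) : ℝ)|) ⁻¹' Iic a := by
    ext θ; simp [Zcl]
  rw [this]
  exact MeasurableSet.iUnion fun i =>
    (((continuous_subtype_val.inner continuous_const).abs).measurable measurableSet_Iic)

lemma nontrivial_euclidean (hn : 1 ≤ n) : Nontrivial (EuclideanSpace ℝ (Fin n)) := by
  refine nontrivial_of_ne (EuclideanSpace.single ⟨0, by omega⟩ 1) 0 fun h => ?_
  have := congr_arg (fun v : EuclideanSpace ℝ (Fin n) => v ⟨0, by omega⟩) h
  rw [EuclideanSpace.single_apply] at this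
  simp at this

/-- The polar-coordinates formula for the Gaussian measure of `Aset w t`. -/
lemma gmeas_Aset (hn : 1 ≤ n) (w : Fin n → EuclideanSpace ℝ (Fin n)) (t : ℝ) :
    gmeas n (Aset w t) =
      ∫⁻ r : Set.Ioi (0 : ℝ), gden n r *
        ((volume : Measure (EuclideanSpace ℝ (Fin n))).toSphere Set.univ
          - (volume : Measure (EuclideanSpace ℝ (Fin n))).toSphere (Zop w (t / r)))
        ∂(Measure.volumeIoiPow (Module.finrank ℝ (EuclideanSpace ℝ (Fin n)) - 1)) := by
  haveI := nontrivial_euclidean hn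
  set F : (EuclideanSpace ℝ (Fin n)) → ℝ≥0∞ := fun x => (Aset w t).indicator (fun x => gden n ‖x‖) x with hF
  have hFm : Measurable F :=
    Measurable.indicator ((measurable_gden n).comp continuous_norm.measurable)
      (measurable_Aset w t)
  have h1 : gmeas n (Aset w t) = ∫⁻ x, F x ∂(volume : Measure (EuclideanSpace ℝ (Fin n))) := by
    rw [gmeas, withDensity_apply _ (measurable_Aset w t), ← lintegral_indicator
      (measurable_Aset w t)]
  rw [h1]
  have h2 : ∫⁻ x, F x ∂(volume : Measure (EuclideanSpace ℝ (Fin n)))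
      = ∫⁻ y : ({0}ᶜ : Set (EuclideanSpace ℝ (Fin n))), F (y : EuclideanSpace ℝ (Fin n))
        ∂((volume : Measure (EuclideanSpace ℝ (Fin n))).comap Subtype.val) := by
    rw [lintegral_subtype_comap (measurableSet_singleton (0 : EuclideanSpace ℝ (Fin n))).compl,
      MeasureTheory.restrict_compl_singleton]
  rw [h2]
  have mp := (volume : Measure (EuclideanSpace ℝ (Fin n))).measurePreserving_homeomorphUnitSphereProd
  set T := (homeomorphUnitSphereProd (EuclideanSpace ℝ (Fin n))).toMeasurableEquiv with hT
  have mp' : MeasurePreserving T ((volume : Measure (EuclideanSpace ℝ (Fin n))).comap Subtype.val)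
      ((volume : Measure (EuclideanSpace ℝ (Fin n))).toSphere.prod
        (Measure.volumeIoiPow (Module.finrank ℝ (EuclideanSpace ℝ (Fin n)) - 1))) := mp
  have hGm : Measurable fun y : ({0}ᶜ : Set (EuclideanSpace ℝ (Fin n))) => F (y : (EuclideanSpace ℝ (Fin n))) :=
    hFm.comp measurable_subtype_coe
  rw [← (mp'.symm T).lintegral_comp hGm]
  have hsymm : ∀ p : Metric.sphere (0 : (EuclideanSpace ℝ (Fin n))) 1 × Set.Ioi (0 : ℝ),
      ((T.symm p : ({0}ᶜ : Set (EuclideanSpace ℝ (Fin n)))) : (EuclideanSpace ℝ (Fin n))) = (p.2 : ℝ) • (p.1 : (EuclideanSpace ℝ (Fin n))) := by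
    intro p
    rfl
  have hprodmeas : Measurable fun p : Metric.sphere (0 : (EuclideanSpace ℝ (Fin n))) 1 × Set.Ioi (0 : ℝ) =>
      F ((p.2 : ℝ) • (p.1 : (EuclideanSpace ℝ (Fin n)))) := by
    apply hFm.comp
    exact ((continuous_subtype_val.comp continuous_snd).smul
      (continuous_subtype_val.comp continuous_fst)).measurable
  calc ∫⁻ p, F ((T.symm p : ({0}ᶜ : Set (EuclideanSpace ℝ (Fin n)))) : (EuclideanSpace ℝ (Fin n)))
        ∂((volume : Measure (EuclideanSpace ℝ (Fin n))).toSphere.prod (Measure.volumeIoiPow (Module.finrank ℝ (EuclideanSpace ℝ (Fin n)) - 1)))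
      = ∫⁻ p, F ((p.2 : ℝ) • (p.1 : (EuclideanSpace ℝ (Fin n))))
        ∂((volume : Measure (EuclideanSpace ℝ (Fin n))).toSphere.prod (Measure.volumeIoiPow (Module.finrank ℝ (EuclideanSpace ℝ (Fin n)) - 1))) := by
        exact lintegral_congr fun p => by rw [hsymm]
    _ = ∫⁻ r : Set.Ioi (0 : ℝ), ∫⁻ θ : Metric.sphere (0 : (EuclideanSpace ℝ (Fin n))) 1, F ((r : ℝ) • (θ : (EuclideanSpace ℝ (Fin n))))
        ∂(volume : Measure (EuclideanSpace ℝ (Fin n))).toSphere ∂(Measure.volumeIoiPow (Module.finrank ℝ (EuclideanSpace ℝ (Fin n)) - 1)) := by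
        exact lintegral_prod_symm _ hprodmeas.aemeasurable
    _ = ∫⁻ r : Set.Ioi (0 : ℝ), gden n r *
        ((volume : Measure (EuclideanSpace ℝ (Fin n))).toSphere Set.univ - (volume : Measure (EuclideanSpace ℝ (Fin n))).toSphere (Zop w (t / r)))
        ∂(Measure.volumeIoiPow (Module.finrank ℝ (EuclideanSpace ℝ (Fin n)) - 1)) := by
        refine lintegral_congr fun r => ?_
        have hr : (0 : ℝ) < r := r.2
        have hsect : ∀ θ : Metric.sphere (0 : (EuclideanSpace ℝ (Fin n))) 1, F ((r : ℝ) • (θ : (EuclideanSpace ℝ (Fin n))))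
            = ((Zop w (t / r))ᶜ).indicator (fun _ => gden n r) θ := by
          intro θ
          have hnorm : ‖(r : ℝ) • (θ : (EuclideanSpace ℝ (Fin n)))‖ = (r : ℝ) := by
            rw [norm_smul, Real.norm_eq_abs, abs_of_pos hr,
              mem_sphere_zero_iff_norm.mp θ.2, mul_one]
          have hmem : ((r : ℝ) • (θ : (EuclideanSpace ℝ (Fin n)))) ∈ Aset w t ↔ θ ∈ (Zop w (t / r))ᶜ := by
            simp only [Aset, Set.mem_setOf_eq, Set.mem_compl_iff, Zop, not_exists, not_lt]
            constructor
            · intro hh i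
              have := hh i
              rw [real_inner_smul_left, abs_mul, abs_of_pos hr] at this
              rw [div_le_iff₀ hr]
              linarith [this]
            · intro hh i
              have := hh i
              rw [div_le_iff₀ hr] at this
              rw [real_inner_smul_left, abs_mul, abs_of_pos hr]
              linarith [this]
          by_cases hθ : θ ∈ (Zop w (t / r))ᶜ
          · rw [Set.indicator_of_mem hθ, hF]
            show (Aset w t).indicator (fun x => gden n ‖x‖)
              ((r : ℝ) • (θ : EuclideanSpace ℝ (Fin n))) = gden n r
            rw [Set.indicator_of_mem (hmem.mpr hθ), hnorm]
          · rw [Set.indicator_of_notMem hθ, hF]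
            show (Aset w t).indicator (fun x => gden n ‖x‖)
              ((r : ℝ) • (θ : EuclideanSpace ℝ (Fin n))) = 0
            rw [Set.indicator_of_notMem (fun hc => hθ (hmem.mp hc))]
        calc ∫⁻ θ, F ((r : ℝ) • (θ : (EuclideanSpace ℝ (Fin n)))) ∂(volume : Measure (EuclideanSpace ℝ (Fin n))).toSphere
            = ∫⁻ θ, ((Zop w (t / r))ᶜ).indicator (fun _ => gden n r) θ
              ∂(volume : Measure (EuclideanSpace ℝ (Fin n))).toSphere := lintegral_congr hsect
          _ = gden n r * (volume : Measure (EuclideanSpace ℝ (Fin n))).toSphere ((Zop w (t / r))ᶜ) := by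
              rw [lintegral_indicator_const (measurable_Zop w _).compl]
          _ = gden n r * ((volume : Measure (EuclideanSpace ℝ (Fin n))).toSphere Set.univ
              - (volume : Measure (EuclideanSpace ℝ (Fin n))).toSphere (Zop w (t / r))) := by
              rw [measure_compl (measurable_Zop w _) (measure_ne_top _ _)]


lemma measurable_zoneUnion (w : Fin n → EuclideanSpace ℝ (Fin n)) (α : ℝ) :
    MeasurableSet (⋃ j, sphericalZone (w j) α) := by
  refine MeasurableSet.iUnion fun j => ?_
  have : sphericalZone (w j) α = (Metric.sphere (0 : EuclideanSpace ℝ (Fin n)) 1)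
      ∩ ((fun x : EuclideanSpace ℝ (Fin n) => |(inner ℝ x (w j) : ℝ)|) ⁻¹' Iic (Real.sin α)) := by
    ext x; simp [sphericalZone, Set.mem_setOf_eq]
  rw [this]
  exact (Metric.isClosed_sphere.measurableSet).inter
    ((continuous_id.inner continuous_const).abs.measurable measurableSet_Iic)

lemma uniformSphere_apply {B : Set (EuclideanSpace ℝ (Fin n))} (hB : MeasurableSet B) :
    uniformSphere n B = ((volume : Measure (EuclideanSpace ℝ (Fin n))).toSphere Set.univ)⁻¹
      * (volume : Measure (EuclideanSpace ℝ (Fin n))).toSphere (Subtype.val ⁻¹' B) := by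
  rw [uniformSphere, Measure.smul_apply, Measure.map_apply measurable_subtype_coe hB,
    smul_eq_mul]

lemma preimage_zoneUnion (w : Fin n → EuclideanSpace ℝ (Fin n)) (α : ℝ) :
    (Subtype.val ⁻¹' (⋃ j, sphericalZone (w j) α) :
      Set (Metric.sphere (0 : EuclideanSpace ℝ (Fin n)) 1)) = Zcl w (Real.sin α) := by
  ext θ
  simp only [Set.mem_preimage, Set.mem_iUnion, sphericalZone, Set.mem_setOf_eq, Zcl]
  constructor
  · rintro ⟨j, _, hj⟩
    exact ⟨j, hj⟩
  · rintro ⟨j, hj⟩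
    exact ⟨j, θ.2, hj⟩

lemma toSphere_univ_pos_ne_top (hn : 1 ≤ n) :
    (volume : Measure (EuclideanSpace ℝ (Fin n))).toSphere Set.univ ≠ 0 ∧
    (volume : Measure (EuclideanSpace ℝ (Fin n))).toSphere Set.univ ≠ ⊤ := by
  rw [Measure.toSphere_apply_univ]
  refine ⟨mul_ne_zero ?_ (measure_ball_pos _ _ one_pos).ne',
    ENNReal.mul_ne_top (ENNReal.natCast_ne_top _) measure_ball_lt_top.ne⟩
  simp only [ne_eq, Nat.cast_eq_zero]
  rw [finrank_euclideanSpace_fin]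
  omega

/-- convert the normalized inequality to an unnormalized one -/
lemma toSphere_zcl_le (hn : 1 ≤ n) {w v : Fin n → EuclideanSpace ℝ (Fin n)} {α : ℝ}
    (h : uniformSphere n (⋃ j, sphericalZone (w j) α)
      ≤ uniformSphere n (⋃ j, sphericalZone (v j) α)) :
    (volume : Measure (EuclideanSpace ℝ (Fin n))).toSphere (Zcl w (Real.sin α))
      ≤ (volume : Measure (EuclideanSpace ℝ (Fin n))).toSphere (Zcl v (Real.sin α)) := by
  obtain ⟨hc0, hctop⟩ := toSphere_univ_pos_ne_top hn
  rw [uniformSphere_apply (measurable_zoneUnion w α),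
    uniformSphere_apply (measurable_zoneUnion v α), preimage_zoneUnion, preimage_zoneUnion] at h
  exact (ENNReal.mul_le_mul_iff_right (ENNReal.inv_ne_zero.mpr hctop)
    (ENNReal.inv_ne_top.mpr hc0)).mp h

/-- from closed-zone comparison at all levels to open-zone comparison -/
lemma toSphere_zop_le (hn : 1 ≤ n) {w v : Fin n → EuclideanSpace ℝ (Fin n)}
    (hw : ∀ i, ‖w i‖ = 1) (hv : ∀ i, ‖v i‖ = 1)
    (hcl : ∀ a : ℝ, 0 ≤ a → a < 1 →
      (volume : Measure (EuclideanSpace ℝ (Fin n))).toSphere (Zcl w a)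
        ≤ (volume : Measure (EuclideanSpace ℝ (Fin n))).toSphere (Zcl v a))
    (s : ℝ) :
    (volume : Measure (EuclideanSpace ℝ (Fin n))).toSphere (Zop w s)
      ≤ (volume : Measure (EuclideanSpace ℝ (Fin n))).toSphere (Zop v s) := by
  rcases le_or_gt s 0 with hs | hs
  · have : Zop w s = ∅ := by
      ext θ
      simp only [Zop, Set.mem_setOf_eq, Set.mem_empty_iff_false, iff_false, not_exists, not_lt]
      intro i
      exact hs.trans (abs_nonneg _)
    rw [this]
    simp
  rcases le_or_gt s 1 with hs1 | hs1
  · -- 0 < s ≤ 1 : approximate from inside by closed zones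
    set a : ℕ → ℝ := fun k => s - s / (k + 2) with ha
    have hak_lt : ∀ k, a k < s := fun k => by
      have : 0 < s / (k + 2) := div_pos hs (by positivity)
      simp only [ha]
      linarith
    have hak_nonneg : ∀ k, 0 ≤ a k := fun k => by
      have : s / (k + 2) ≤ s := by
        apply div_le_self hs.le
        have := Nat.cast_nonneg (α := ℝ) k
        linarith
      simp only [ha]
      linarith
    have hunion : ∀ (u : Fin n → EuclideanSpace ℝ (Fin n)), Zop u s = ⋃ k, Zcl u (a k) := by
      intro u
      ext θ
      simp only [Zop, Zcl, Set.mem_setOf_eq, Set.mem_iUnion]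
      constructor
      · rintro ⟨i, hi⟩
        have hpos : 0 < s - |(inner ℝ (θ : EuclideanSpace ℝ (Fin n)) (u i) : ℝ)| := by linarith
        obtain ⟨k, hk⟩ := exists_nat_ge (s / (s - |(inner ℝ (θ : EuclideanSpace ℝ (Fin n))
          (u i) : ℝ)|))
        refine ⟨k, i, ?_⟩
        have h1 : s ≤ (k : ℝ) * (s - |(inner ℝ (θ : EuclideanSpace ℝ (Fin n)) (u i) : ℝ)|) :=
          (div_le_iff₀ hpos).mp hk
        have h2 : s ≤ ((k : ℝ) + 2) * (s - |(inner ℝ (θ : EuclideanSpace ℝ (Fin n)) (u i) : ℝ)|) := by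
          nlinarith
        have h3 : s / ((k : ℝ) + 2) ≤ s - |(inner ℝ (θ : EuclideanSpace ℝ (Fin n)) (u i) : ℝ)| := by
          rw [div_le_iff₀ (by positivity)]
          linarith [h2]
        simp only [ha]
        linarith
      · rintro ⟨k, i, hi⟩
        exact ⟨i, lt_of_le_of_lt hi (hak_lt k)⟩
    have hmonot : ∀ (u : Fin n → EuclideanSpace ℝ (Fin n)), Monotone fun k => Zcl u (a k) := by
      intro u k l hkl
      intro θ hθ
      obtain ⟨i, hi⟩ := hθ
      refine ⟨i, hi.trans ?_⟩
      simp only [ha]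
      have : s / ((l : ℝ) + 2) ≤ s / ((k : ℝ) + 2) := by
        apply div_le_div_of_nonneg_left hs.le (by positivity)
        · exact_mod_cast by omega
      linarith
    rw [hunion w, hunion v,
      ((hmonot w).directed_le).measure_iUnion,
      ((hmonot v).directed_le).measure_iUnion]
    exact iSup_mono fun k => hcl (a k) (hak_nonneg k) (lt_of_lt_of_le (hak_lt k) hs1)
  · -- s > 1 : both are the whole sphere
    have huniv : ∀ (u : Fin n → EuclideanSpace ℝ (Fin n)), (∀ i, ‖u i‖ = 1) →
        Zop u s = Set.univ := by
      intro u hu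
      ext θ
      simp only [Zop, Set.mem_setOf_eq, Set.mem_univ, iff_true]
      refine ⟨⟨0, by omega⟩, ?_⟩
      calc |(inner ℝ (θ : EuclideanSpace ℝ (Fin n)) (u ⟨0, by omega⟩) : ℝ)|
          ≤ ‖(θ : EuclideanSpace ℝ (Fin n))‖ * ‖u ⟨0, by omega⟩‖ := abs_real_inner_le_norm _ _
        _ = 1 := by rw [mem_sphere_zero_iff_norm.mp θ.2, hu _, mul_one]
        _ < s := hs1
    rw [huniv w hw, huniv v hv]


lemma measurable_mulVec (M : Matrix (Fin n) (Fin n) ℝ) : Measurable M.mulVec := by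
  apply measurable_pi_lambda
  intro i
  show Measurable fun g : Fin n → ℝ => ∑ j, M i j * g j
  exact Finset.measurable_sum _ fun j _ => (measurable_pi_apply j).const_mul _

lemma event_eq (hn : 1 ≤ n) (t : ℝ) :
    {h : Fin n → ℝ | t ≤ ⨅ i, |h i|} = {h | ∀ i, t ≤ |h i|} := by
  haveI : Nonempty (Fin n) := ⟨⟨0, by omega⟩⟩
  ext h
  simp only [Set.mem_setOf_eq]
  rw [le_ciInf_iff (Set.finite_range _).bddBelow]

lemma measurable_event (t : ℝ) : MeasurableSet {h : Fin n → ℝ | ∀ i, t ≤ |h i|} := by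
  have : {h : Fin n → ℝ | ∀ i, t ≤ |h i|} = ⋂ i, (fun h : Fin n → ℝ => |h i|) ⁻¹' Ici t := by
    ext h; simp
  rw [this]
  exact MeasurableSet.iInter fun i => ((measurable_pi_apply i).abs measurableSet_Ici)

lemma gaussianOfCov_apply (hn : 1 ≤ n) {S : Matrix (Fin n) (Fin n) ℝ} (hS : S.PosSemidef)
    (t : ℝ) :
    gaussianOfCov S {h | t ≤ ⨅ i, |h i|} = gmeas n (Aset (rowVec hS) t) := by
  rw [gaussianOfCov, dif_pos hS, event_eq hn t]
  change (stdGaussianPi n).map hS.sqrt.mulVec _ = _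
  rw [Measure.map_apply (measurable_mulVec _) (measurable_event t)]
  have hpre : hS.sqrt.mulVec ⁻¹' {h | ∀ i, t ≤ |h i|}
      = {g : Fin n → ℝ | ∀ i, t ≤ |∑ j, hS.sqrt i j * g j|} := by
    ext g
    simp only [Set.mem_preimage, Set.mem_setOf_eq]
    refine forall_congr' fun i => ?_
    rw [show hS.sqrt.mulVec g i = ∑ j, hS.sqrt i j * g j from rfl]
  have hmeas2 : MeasurableSet {g : Fin n → ℝ | ∀ i, t ≤ |∑ j, hS.sqrt i j * g j|} := by
    rw [← hpre]
    exact (measurable_mulVec _) (measurable_event t)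
  rw [hpre, stdGaussianPi_apply n hmeas2]
  congr 1

end VZaux

/-- The volumetric zone conjecture implies the strengthened Litvak conjecture:
if for all `d ≥ 2`, `n ≥ 1`, `α ∈ [0, π/2]` and unit vectors `u j ∈ S^{d-1}` the normalized
surface measure of `⋃ j Z(u j, α)` is at most that of `⋃ j Z(v j, α)` for the evenly spaced
normals `v j`, then for every `n × n` correlation matrix `S`, every `t ≥ 0`, `h ∼ N(0, S)`
and `z ∼ N(0, Σᶜᵒˢ)` one has `ℙ[min_i |z i| ≥ t] ≤ ℙ[min_i |h i| ≥ t]`. -/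

theorem volumetric_zone_implies_stochastic_domination
    (H : ∀ d : ℕ, 2 ≤ d → ∀ n : ℕ, 1 ≤ n → ∀ α ∈ Set.Icc (0 : ℝ) (π / 2),
      ∀ u : Fin n → EuclideanSpace ℝ (Fin d), (∀ j, ‖u j‖ = 1) →
        uniformSphere d (⋃ j, sphericalZone (u j) α)
          ≤ uniformSphere d (⋃ j, sphericalZone (evenZoneNormal d n j) α)) :
    ∀ n : ℕ, 1 ≤ n → ∀ S : Matrix (Fin n) (Fin n) ℝ, S.PosSemidef →
      (∀ i, S i i = 1) → ∀ t : ℝ, 0 ≤ t →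
        gaussianOfCov (Matrix.of fun i j : Fin n =>
            Real.cos (π * ((i : ℝ) - (j : ℝ)) / n)) {z | t ≤ ⨅ i, |z i|}
          ≤ gaussianOfCov S {h | t ≤ ⨅ i, |h i|} := by
  intro n hn S hS hdiag t ht
  rcases Nat.lt_or_ge n 2 with h2 | h2
  · -- n = 1 : the two matrices coincide
    have hn1 : n = 1 := by omega
    subst hn1
    have hSC : (Matrix.of fun i j : Fin 1 =>
        Real.cos (π * ((i : ℝ) - (j : ℝ)) / ((1 : ℕ) : ℝ))) = S := by
      ext i j
      have hi : i = 0 := Subsingleton.elim i 0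
      have hj : j = 0 := Subsingleton.elim j 0
      subst hi; subst hj
      simp only [Matrix.of_apply, Fin.val_zero, Nat.cast_zero, sub_self, mul_zero, zero_div,
        Real.cos_zero, Nat.cast_one]
      exact (hdiag 0).symm
    rw [hSC]
  · obtain ⟨m, rfl⟩ : ∃ m, n = m + 2 := ⟨n - 2, by omega⟩
    have hN1 : 1 ≤ m + 2 := by omega
    have hC : (Matrix.of fun i j : Fin (m + 2) =>
        Real.cos (π * ((i : ℝ) - (j : ℝ)) / ((m + 2 : ℕ) : ℝ))).PosSemidef :=
      VZaux.cosMatrix_posSemidef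
    rw [VZaux.gaussianOfCov_apply hN1 hS t, VZaux.gaussianOfCov_apply hN1 hC t]
    set v : Fin (m + 2) → EuclideanSpace ℝ (Fin (m + 2)) :=
      fun j => evenZoneNormal (m + 2) (m + 2) j with hv
    set u : Fin (m + 2) → EuclideanSpace ℝ (Fin (m + 2)) := VZaux.rowVec hS with hu
    set c : Fin (m + 2) → EuclideanSpace ℝ (Fin (m + 2)) := VZaux.rowVec hC with hcdef
    have hGram : ∀ i j, (inner ℝ (v i) (v j) : ℝ) = inner ℝ (c i) (c j) := by
      intro i j
      rw [hv, hcdef]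
      rw [VZaux.inner_evenZoneNormal i j, VZaux.inner_rowVec hC i j]
      rfl
    obtain ⟨e, he⟩ := VZaux.exists_isometry v c hGram
    have hAc : VZaux.Aset c t = e.symm ⁻¹' (VZaux.Aset v t) := by
      ext x
      simp only [VZaux.Aset, Set.mem_setOf_eq, Set.mem_preimage]
      refine forall_congr' fun i => ?_
      have h1 : (inner ℝ x (c i) : ℝ) = inner ℝ (e.symm x) (v i) := by
        rw [← he i]
        have h2 := e.inner_map_map (e.symm x) (v i)
        rw [e.apply_symm_apply] at h2
        exact h2
      rw [h1]
    rw [hAc, VZaux.gmeas_preimage e.symm (VZaux.measurable_Aset v t)]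
    rw [VZaux.gmeas_Aset hN1 v t, VZaux.gmeas_Aset hN1 u t]
    refine lintegral_mono fun r => ?_
    refine mul_le_mul_right (tsub_le_tsub_left ?_ _) _
    refine VZaux.toSphere_zop_le hN1 (VZaux.norm_rowVec hS hdiag)
      (fun i => VZaux.norm_evenZoneNormal i) ?_ (t / r)
    intro a ha0 ha1
    have hα : Real.arcsin a ∈ Set.Icc (0 : ℝ) (π / 2) :=
      ⟨Real.arcsin_nonneg.mpr ha0, Real.arcsin_le_pi_div_two a⟩
    have hH := H (m + 2) (by omega) (m + 2) (by omega) (Real.arcsin a) hα u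
      (VZaux.norm_rowVec hS hdiag)
    have hfin := VZaux.toSphere_zcl_le hN1 hH
    rwa [Real.sin_arcsin (by linarith) ha1.le] at hfin
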